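/- For a skew-symmetrizable real matrix B, there exists a diagonal matrix H with positive diagonal entries such that H B H^{-1} is skew-symmetric; moreover, the matrix S(B) = H B H^{-1} is uniquely determined by B, with entries s_ij = sgn(b_ij) · sqrt(|b_ij b_ji|). -/

import Mathlib

/-- For a skew-symmetrizable real matrix `B`, there exists a diagonal matrix `H`
with positive diagonal entries such that `H B H⁻¹` is skew-symmetric; moreover
`S(B) = H B H⁻¹` is uniquely determined by `B`, with entries
`s_ij = sgn(b_ij) · √|b_ij b_ji|`. -/
theorem exists_unique_skew_symmetrization {n : ℕ} (B : Matrix (Fin n) (Fin n) ℝ)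
    (hB : ∃ d : Fin n → ℝ, (∀ i, 0 < d i) ∧ ∀ i j, d i * B i j = -(d j * B j i)) :
    (∃ H : Fin n → ℝ, (∀ i, 0 < H i) ∧
      ∀ i j, H i * B i j * (H j)⁻¹ = -(H j * B j i * (H i)⁻¹)) ∧
    (∀ H : Fin n → ℝ, (∀ i, 0 < H i) →
      (∀ i j, H i * B i j * (H j)⁻¹ = -(H j * B j i * (H i)⁻¹)) →
      ∀ i j, H i * B i j * (H j)⁻¹ = Real.sign (B i j) * Real.sqrt |B i j * B j i|) := by
  obtain ⟨d, hd, hskew⟩ := hB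
  constructor
  · refine ⟨fun i => Real.sqrt (d i), fun i => Real.sqrt_pos.2 (hd i), fun i j => ?_⟩
    have hi : (0:ℝ) < Real.sqrt (d i) := Real.sqrt_pos.2 (hd i)
    have hj : (0:ℝ) < Real.sqrt (d j) := Real.sqrt_pos.2 (hd j)
    have hii : Real.sqrt (d i) * Real.sqrt (d i) = d i := Real.mul_self_sqrt (hd i).le
    have hjj : Real.sqrt (d j) * Real.sqrt (d j) = d j := Real.mul_self_sqrt (hd j).le
    have h := hskew i j
    field_simp
    linear_combination B i j * hii + B j i * hjj + h
  · intro H hpos hH i j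
    set a := H i with ha
    set b := H j with hb
    have ha0 : (0:ℝ) < a := hpos i
    have hb0 : (0:ℝ) < b := hpos j
    have h := hH i j
    have key : a * a * B i j = -(b * b * B j i) := by
      rw [← ha, ← hb] at h
      field_simp at h
      nlinarith [h]
    have hy : B j i = -(a * a * B i j) / (b * b) := by
      field_simp
      linarith [key]
    have habs : |B i j * B j i| = (a * |B i j| / b) ^ 2 := by
      rw [hy]
      rw [abs_mul, abs_div, abs_neg, abs_mul, abs_mul, abs_of_pos ha0, abs_of_pos (mul_pos hb0 hb0)]
      field_simp
    have hsabs : Real.sign (B i j) * |B i j| = B i j := by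
      rcases lt_trichotomy (B i j) 0 with h' | h' | h'
      · rw [Real.sign_of_neg h', abs_of_neg h']; ring
      · simp [h']
      · rw [Real.sign_of_pos h', abs_of_pos h']; ring
    rw [habs, Real.sqrt_sq (by positivity),
      show Real.sign (B i j) * (a * |B i j| / b) = a * (Real.sign (B i j) * |B i j|) / b by ring,
      hsabs]
    field_simp
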